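/- For any integer T, every nonnegative integer n with n ≡ T (mod 2) and 4n ≥ T² such that 4n − T² is not of the form 4^a(8b+7) admits a representation n = Σaᵥ² with Σaᵥ = T. -/

import Mathlib

def bQ (A B C y z : ℤ) : ℤ := A * y^2 + 2 * B * y * z + C * z^2

def bPos (A B C : ℤ) : Prop := ∀ y z : ℤ, ¬(y = 0 ∧ z = 0) → 0 < bQ A B C y z

lemma bMin (A B C : ℤ) (h : bPos A B C) :
    ∃ y z : ℤ, ¬(y = 0 ∧ z = 0) ∧ ∀ y' z' : ℤ, ¬(y' = 0 ∧ z' = 0) →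
      bQ A B C y z ≤ bQ A B C y' z' := by
  have hA : 0 < bQ A B C 1 0 := h 1 0 (by simp)
  set S : Set ℕ := {k | ∃ y z : ℤ, ¬(y = 0 ∧ z = 0) ∧ bQ A B C y z = (k : ℤ)} with hS
  have hne : S.Nonempty :=
    ⟨(bQ A B C 1 0).toNat, 1, 0, by simp, by rw [Int.toNat_of_nonneg hA.le]⟩
  obtain ⟨y, z, hyz, hval⟩ := Nat.sInf_mem hne
  refine ⟨y, z, hyz, ?_⟩
  intro y' z' h'
  have h2 : 0 < bQ A B C y' z' := h y' z' h'
  have hmem : (bQ A B C y' z').toNat ∈ S :=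
    ⟨y', z', h', by rw [Int.toNat_of_nonneg h2.le]⟩
  have := Nat.sInf_le hmem
  omega

/-- Normal form of a positive definite binary form. -/
lemma bNormal (A B C : ℤ) (h : bPos A B C) :
    ∃ p q r s m B' C' : ℤ, p * s - q * r = 1 ∧
      (∀ Y Z : ℤ, bQ A B C (p*Y + q*Z) (r*Y + s*Z) = bQ m B' C' Y Z) ∧
      0 < m ∧ -m ≤ 2*B' ∧ 2*B' ≤ m ∧ m ≤ C' ∧
      m * C' - B'^2 = A * C - B^2 ∧
      (∀ y' z' : ℤ, ¬(y' = 0 ∧ z' = 0) → m ≤ bQ A B C y' z') := by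
  obtain ⟨y₀, z₀, h0, hmin⟩ := bMin A B C h
  have hmpos : 0 < bQ A B C y₀ z₀ := h y₀ z₀ h0
  -- the minimal vector is primitive
  have hcop : IsCoprime y₀ z₀ := by
    rw [Int.isCoprime_iff_gcd_eq_one]
    by_contra hg
    have hg0 : Int.gcd y₀ z₀ ≠ 0 := by
      intro hz; rw [Int.gcd_eq_zero_iff] at hz; exact h0 hz
    obtain ⟨g, hgd⟩ : ∃ g : ℕ, (g : ℤ) = (Int.gcd y₀ z₀ : ℤ) := ⟨Int.gcd y₀ z₀, rfl⟩
    have hg2 : 2 ≤ (g : ℤ) := by omega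
    obtain ⟨y₁, hy₁⟩ : (g : ℤ) ∣ y₀ := hgd ▸ Int.gcd_dvd_left _ _
    obtain ⟨z₁, hz₁⟩ : (g : ℤ) ∣ z₀ := hgd ▸ Int.gcd_dvd_right _ _
    have h1 : ¬(y₁ = 0 ∧ z₁ = 0) := by
      rintro ⟨rfl, rfl⟩
      simp only [mul_zero] at hy₁ hz₁
      exact h0 ⟨hy₁, hz₁⟩
    have hval : bQ A B C y₀ z₀ = (g : ℤ)^2 * bQ A B C y₁ z₁ := by
      rw [hy₁, hz₁]; unfold bQ; ring
    have hle := hmin y₁ z₁ h1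
    have hpos1 := h y₁ z₁ h1
    have h4 : (4:ℤ) ≤ (g : ℤ)^2 := by nlinarith
    nlinarith
  obtain ⟨v, b, hab⟩ := hcop
  -- columns (y₀,z₀) and (-b + k y₀, v + k z₀)
  have hdet1 : y₀ * v - z₀ * (-b) = 1 := by linarith [hab]
  obtain ⟨k, hk1, hk2⟩ : ∃ k, -(bQ A B C y₀ z₀) ≤
        2*((A * y₀ * (-b) + B * (y₀ * v + z₀ * (-b)) + C * z₀ * v) + k*(bQ A B C y₀ z₀)) ∧
      2*((A * y₀ * (-b) + B * (y₀ * v + z₀ * (-b)) + C * z₀ * v) + k*(bQ A B C y₀ z₀)) ≤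
        bQ A B C y₀ z₀ := by
    set m := bQ A B C y₀ z₀
    set B₁ := A * y₀ * (-b) + B * (y₀ * v + z₀ * (-b)) + C * z₀ * v with hB₁
    obtain ⟨k₁, hk₁⟩ : ∃ t, B₁ % m = B₁ + t * m := ⟨-(B₁/m), by rw [Int.emod_def]; ring⟩
    have h2 : 0 ≤ B₁ % m := Int.emod_nonneg B₁ (by omega)
    have h3 : B₁ % m < m := Int.emod_lt_of_pos B₁ hmpos
    rcases le_or_gt (2*(B₁ % m)) m with hc | hc
    · exact ⟨k₁, by linarith [hk₁], by linarith [hk₁]⟩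
    · exact ⟨k₁ - 1, by nlinarith [hk₁], by nlinarith [hk₁]⟩
  refine ⟨y₀, -b + k * y₀, z₀, v + k * z₀, bQ A B C y₀ z₀,
    A * y₀ * (-b + k * y₀) + B * (y₀ * (v + k * z₀) + z₀ * (-b + k * y₀)) + C * z₀ * (v + k * z₀),
    bQ A B C (-b + k * y₀) (v + k * z₀), ?_, ?_, hmpos, ?_, ?_, ?_, ?_, hmin⟩
  · linarith [hdet1]
  · intro Y Z; unfold bQ; ring
  · have : A * y₀ * (-b + k * y₀) + B * (y₀ * (v + k * z₀) + z₀ * (-b + k * y₀)) +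
        C * z₀ * (v + k * z₀)
        = (A * y₀ * (-b) + B * (y₀ * v + z₀ * (-b)) + C * z₀ * v) + k*(bQ A B C y₀ z₀) := by
      unfold bQ; ring
    rw [this]; exact hk1
  · have : A * y₀ * (-b + k * y₀) + B * (y₀ * (v + k * z₀) + z₀ * (-b + k * y₀)) +
        C * z₀ * (v + k * z₀)
        = (A * y₀ * (-b) + B * (y₀ * v + z₀ * (-b)) + C * z₀ * v) + k*(bQ A B C y₀ z₀) := by
      unfold bQ; ring
    rw [this]; exact hk2
  · apply hmin
    rintro ⟨hq0, hs0⟩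
    have h2 : y₀ * (v + k * z₀) - z₀ * (-b + k * y₀) = 1 := by linear_combination hdet1
    rw [hq0, hs0] at h2; simp at h2
  · have key : bQ A B C y₀ z₀ * bQ A B C (-b + k * y₀) (v + k * z₀) -
        (A * y₀ * (-b + k * y₀) + B * (y₀ * (v + k * z₀) + z₀ * (-b + k * y₀)) +
          C * z₀ * (v + k * z₀))^2
        = (A * C - B^2) * (y₀ * (v + k * z₀) - z₀ * (-b + k * y₀))^2 := by
      unfold bQ; ring
    have hd2 : y₀ * (v + k * z₀) - z₀ * (-b + k * y₀) = 1 := by linarith [hdet1]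
    rw [key, hd2]; ring

lemma bMinBound (A B C : ℤ) (h : bPos A B C) :
    ∃ y z : ℤ, ¬(y = 0 ∧ z = 0) ∧ 3 * (bQ A B C y z)^2 ≤ 4 * (A * C - B^2) := by
  obtain ⟨p, q, r, s, m, B', C', hdet, hsub, hm, hb1, hb2, hmC, hdf, hmin⟩ := bNormal A B C h
  have hval : bQ A B C p r = m := by
    have := hsub 1 0
    simp only [mul_one, mul_zero, add_zero] at this
    rw [this]; unfold bQ; ring
  refine ⟨p, r, ?_, ?_⟩
  · rintro ⟨rfl, rfl⟩; simp at hdet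
  · rw [hval]; nlinarith

lemma bEquivId (A B C : ℤ) (h : bPos A B C) (hd : A * C - B^2 = 1) :
    ∃ p q r s : ℤ, p * s - q * r = 1 ∧
      ∀ y z : ℤ, bQ A B C (p * y + q * z) (r * y + s * z) = y^2 + z^2 := by
  obtain ⟨p, q, r, s, m, B', C', hdet, hsub, hm, hb1, hb2, hmC, hdf, hmin⟩ := bNormal A B C h
  rw [hd] at hdf
  have hm1 : m = 1 := by nlinarith
  have hB0 : B' = 0 := by omega
  have hC1 : C' = 1 := by rw [hm1, hB0] at hdf; omega
  refine ⟨p, q, r, s, hdet, ?_⟩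
  intro y z
  rw [hsub y z, hm1, hB0, hC1]
  unfold bQ; ring

def tQ (a b c d e f x y z : ℤ) : ℤ :=
  a * x^2 + b * y^2 + c * z^2 + 2*d*x*y + 2*e*x*z + 2*f*y*z
def tDet (a b c d e f : ℤ) : ℤ := a*b*c + 2*d*e*f - a*f^2 - b*e^2 - c*d^2
def tPos (a b c d e f : ℤ) : Prop :=
  ∀ x y z : ℤ, ¬(x = 0 ∧ y = 0 ∧ z = 0) → 0 < tQ a b c d e f x y z
def det3 (p11 p12 p13 p21 p22 p23 p31 p32 p33 : ℤ) : ℤ :=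
  p11*(p22*p33 - p23*p32) - p12*(p21*p33 - p23*p31) + p13*(p21*p32 - p22*p31)
def tBil (a b c d e f x y z x' y' z' : ℤ) : ℤ :=
  a*x*x' + b*y*y' + c*z*z' + d*(x*y' + y*x') + e*(x*z' + z*x') + f*(y*z' + z*y')

lemma subst_vals (a b c d e f p11 p12 p13 p21 p22 p23 p31 p32 p33 X Y Z : ℤ) :
    tQ a b c d e f (p11*X + p12*Y + p13*Z) (p21*X + p22*Y + p23*Z) (p31*X + p32*Y + p33*Z)
      = tQ (tQ a b c d e f p11 p21 p31) (tQ a b c d e f p12 p22 p32)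
          (tQ a b c d e f p13 p23 p33)
          (tBil a b c d e f p11 p21 p31 p12 p22 p32)
          (tBil a b c d e f p11 p21 p31 p13 p23 p33)
          (tBil a b c d e f p12 p22 p32 p13 p23 p33) X Y Z := by
  unfold tQ tBil; ring

lemma subst_det (a b c d e f p11 p12 p13 p21 p22 p23 p31 p32 p33 : ℤ) :
    tDet (tQ a b c d e f p11 p21 p31) (tQ a b c d e f p12 p22 p32)
          (tQ a b c d e f p13 p23 p33)
          (tBil a b c d e f p11 p21 p31 p12 p22 p32)
          (tBil a b c d e f p11 p21 p31 p13 p23 p33)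
          (tBil a b c d e f p12 p22 p32 p13 p23 p33)
      = tDet a b c d e f * (det3 p11 p12 p13 p21 p22 p23 p31 p32 p33)^2 := by
  unfold tDet tQ tBil det3; ring

/-- Inverse of a determinant-one 3×3 integer matrix (given columnwise action). -/
lemma inv3 (p11 p12 p13 p21 p22 p23 p31 p32 p33 : ℤ)
    (h : det3 p11 p12 p13 p21 p22 p23 p31 p32 p33 = 1) :
    ∃ q11 q12 q13 q21 q22 q23 q31 q32 q33 : ℤ,
      ∀ x y z : ℤ,
        (p11*(q11*x+q12*y+q13*z) + p12*(q21*x+q22*y+q23*z) + p13*(q31*x+q32*y+q33*z) = x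
        ∧ p21*(q11*x+q12*y+q13*z) + p22*(q21*x+q22*y+q23*z) + p23*(q31*x+q32*y+q33*z) = y
        ∧ p31*(q11*x+q12*y+q13*z) + p32*(q21*x+q22*y+q23*z) + p33*(q31*x+q32*y+q33*z) = z)
        ∧ (q11*(p11*x+p12*y+p13*z) + q12*(p21*x+p22*y+p23*z) + q13*(p31*x+p32*y+p33*z) = x
        ∧ q21*(p11*x+p12*y+p13*z) + q22*(p21*x+p22*y+p23*z) + q23*(p31*x+p32*y+p33*z) = y
        ∧ q31*(p11*x+p12*y+p13*z) + q32*(p21*x+p22*y+p23*z) + q33*(p31*x+p32*y+p33*z) = z) := by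
  unfold det3 at h
  refine ⟨p22*p33 - p23*p32, -(p12*p33 - p13*p32), p12*p23 - p13*p22,
    -(p21*p33 - p23*p31), p11*p33 - p13*p31, -(p11*p23 - p13*p21),
    p21*p32 - p22*p31, -(p11*p32 - p12*p31), p11*p22 - p12*p21, ?_⟩
  intro x y z
  refine ⟨⟨by linear_combination x*h, by linear_combination y*h, by linear_combination z*h⟩,
    by linear_combination x*h, by linear_combination y*h, by linear_combination z*h⟩

/-- Completion of a primitive vector to a determinant-one matrix (as first column). -/
lemma complete3 (v1 v2 v3 : ℤ) (hprim : Int.gcd ((Int.gcd v1 v2 : ℤ)) v3 = 1) :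
    ∃ p12 p13 p22 p23 p32 p33 : ℤ, det3 v1 p12 p13 v2 p22 p23 v3 p32 p33 = 1 := by
  by_cases h12 : v1 = 0 ∧ v2 = 0
  · obtain ⟨rfl, rfl⟩ := h12
    have : v3.natAbs = 1 := by simpa using hprim
    have h3 : v3 = 1 ∨ v3 = -1 := Int.natAbs_eq_iff.mp this |>.imp id (by simp)
    refine ⟨1, 0, 0, v3, 0, 0, ?_⟩
    unfold det3; rcases h3 with rfl | rfl <;> ring
  · have hg0 : Int.gcd v1 v2 ≠ 0 := by
      intro hz; rw [Int.gcd_eq_zero_iff] at hz; exact h12 hz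
    obtain ⟨g, hgd⟩ : ∃ g : ℕ, (g : ℤ) = ((Int.gcd v1 v2 : ℕ) : ℤ) := ⟨_, rfl⟩
    have hgz : (g : ℤ) ≠ 0 := by rw [hgd]; exact_mod_cast hg0
    obtain ⟨w1, hw1⟩ : (g : ℤ) ∣ v1 := hgd ▸ Int.gcd_dvd_left _ _
    obtain ⟨w2, hw2⟩ : (g : ℤ) ∣ v2 := hgd ▸ Int.gcd_dvd_right _ _
    have hbez : (g : ℤ) = v1 * Int.gcdA v1 v2 + v2 * Int.gcdB v1 v2 := by
      rw [hgd]; exact Int.gcd_eq_gcd_ab v1 v2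
    set p := Int.gcdA v1 v2
    set q := Int.gcdB v1 v2
    have hcop : IsCoprime (g : ℤ) v3 := by
      rw [Int.isCoprime_iff_gcd_eq_one]
      rw [hgd]; exact hprim
    obtain ⟨s, t, hst⟩ := hcop
    -- s * g + t * v3 = 1
    have hpw : (g:ℤ) * (p * w1 + q * w2) = (g:ℤ) * 1 := by
      rw [mul_one]; linear_combination - hbez - p * hw1 - q * hw2
    have hpw1 : p * w1 + q * w2 = 1 := mul_left_cancel₀ hgz hpw
    refine ⟨-q, -(w1*t), p, -(w2*t), 0, s, ?_⟩
    unfold det3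
    linear_combination (-s) * hbez + (t*v3) * hpw1 + hst

lemma round_lemma (m B : ℤ) (hm : 0 < m) :
    ∃ k : ℤ, -m ≤ 2*(B + k*m) ∧ 2*(B + k*m) ≤ m := by
  obtain ⟨k₁, hk₁⟩ : ∃ t, B % m = B + t * m := ⟨-(B/m), by rw [Int.emod_def]; ring⟩
  have h2 : 0 ≤ B % m := Int.emod_nonneg B (by omega)
  have h3 : B % m < m := Int.emod_lt_of_pos B hm
  rcases le_or_gt (2*(B % m)) m with hc | hc
  · exact ⟨k₁, by linarith, by linarith⟩
  · exact ⟨k₁ - 1, by nlinarith, by nlinarith⟩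

lemma tMin (a b c d e f : ℤ) (h : tPos a b c d e f) :
    ∃ v1 v2 v3 : ℤ, ¬(v1 = 0 ∧ v2 = 0 ∧ v3 = 0) ∧ ∀ x y z : ℤ,
      ¬(x = 0 ∧ y = 0 ∧ z = 0) → tQ a b c d e f v1 v2 v3 ≤ tQ a b c d e f x y z := by
  have hA : 0 < tQ a b c d e f 1 0 0 := h 1 0 0 (by simp)
  set S : Set ℕ := {k | ∃ x y z : ℤ, ¬(x = 0 ∧ y = 0 ∧ z = 0) ∧ tQ a b c d e f x y z = (k : ℤ)}
    with hS
  have hne : S.Nonempty :=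
    ⟨(tQ a b c d e f 1 0 0).toNat, 1, 0, 0, by simp, by rw [Int.toNat_of_nonneg hA.le]⟩
  obtain ⟨v1, v2, v3, hv, hval⟩ := Nat.sInf_mem hne
  refine ⟨v1, v2, v3, hv, ?_⟩
  intro x y z h'
  have h2 : 0 < tQ a b c d e f x y z := h x y z h'
  have hmem : (tQ a b c d e f x y z).toNat ∈ S :=
    ⟨x, y, z, h', by rw [Int.toNat_of_nonneg h2.le]⟩
  have := Nat.sInf_le hmem
  omega

lemma tern_min_one (a₁ H Qv L : ℤ) (ha₁pos : 0 < a₁) (hbd : 3*H^2 ≤ 4*a₁)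
    (hge : a₁ ≤ Qv) (hQval' : a₁*Qv = L^2 + H)
    (u1 : 0 ≤ a₁ - 2*L) (u2 : 0 ≤ a₁ + 2*L) : a₁ = 1 := by
  have e1 : 4*L^2 ≤ a₁^2 := by nlinarith [mul_nonneg u1 u2]
  have hge2 : a₁*a₁ ≤ a₁ * Qv := mul_le_mul_of_nonneg_left hge ha₁pos.le
  have e2 : 3*a₁^2 ≤ 4*H := by nlinarith [hge2, hQval', e1]
  have p1 : (3*a₁^2)*(3*a₁^2) ≤ (4*H)*(4*H) :=
    mul_le_mul e2 e2 (by positivity) (by nlinarith [e2, sq_nonneg a₁])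
  have e4 : 27*a₁^4 ≤ 64*a₁ := by nlinarith [p1, hbd]
  by_contra hcon'
  have h2a : 2 ≤ a₁ := by omega
  have h4a : 4 ≤ a₁^2 := by nlinarith
  have h8a : 8 ≤ a₁^3 := by nlinarith
  have h16a : 8*a₁ ≤ a₁^4 := by nlinarith [h8a, ha₁pos]
  linarith

theorem tern_to_squares (a b c d e f : ℤ) (hpos : tPos a b c d e f)
    (hdet : tDet a b c d e f = 1) (x y z : ℤ) :
    ∃ u v w : ℤ, tQ a b c d e f x y z = u^2 + v^2 + w^2 := by
  obtain ⟨v1, v2, v3, hv0, hmin⟩ := tMin a b c d e f hpos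
  have ha₁pos : 0 < tQ a b c d e f v1 v2 v3 := hpos v1 v2 v3 hv0
  -- the minimal vector is primitive
  have hprim : Int.gcd ((Int.gcd v1 v2 : ℤ)) v3 = 1 := by
    by_contra hg
    obtain ⟨g, hgd⟩ : ∃ g : ℕ, (g:ℤ) = ((Int.gcd ((Int.gcd v1 v2 : ℤ)) v3 : ℕ) : ℤ) := ⟨_, rfl⟩
    have hg0 : g ≠ 0 := by
      intro hz
      rw [hz] at hgd
      have h0 : Int.gcd ((Int.gcd v1 v2 : ℤ)) v3 = 0 := by exact_mod_cast hgd.symm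
      rw [Int.gcd_eq_zero_iff] at h0
      obtain ⟨h01, h02⟩ := h0
      have : Int.gcd v1 v2 = 0 := by exact_mod_cast h01
      rw [Int.gcd_eq_zero_iff] at this
      exact hv0 ⟨this.1, this.2, h02⟩
    have hg2 : 2 ≤ (g:ℤ) := by
      have : g ≠ 1 := by intro h1; rw [h1] at hgd; exact hg (by exact_mod_cast hgd.symm)
      omega
    have hd1 : (g:ℤ) ∣ v1 := by
      rw [hgd]; exact dvd_trans (Int.gcd_dvd_left _ _) (Int.gcd_dvd_left _ _)
    have hd2 : (g:ℤ) ∣ v2 := by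
      rw [hgd]; exact dvd_trans (Int.gcd_dvd_left _ _) (Int.gcd_dvd_right _ _)
    have hd3 : (g:ℤ) ∣ v3 := by rw [hgd]; exact Int.gcd_dvd_right _ _
    obtain ⟨w1, hw1⟩ := hd1
    obtain ⟨w2, hw2⟩ := hd2
    obtain ⟨w3, hw3⟩ := hd3
    have h1 : ¬(w1 = 0 ∧ w2 = 0 ∧ w3 = 0) := by
      rintro ⟨rfl, rfl, rfl⟩
      simp only [mul_zero] at hw1 hw2 hw3
      exact hv0 ⟨hw1, hw2, hw3⟩
    have hval : tQ a b c d e f v1 v2 v3 = (g:ℤ)^2 * tQ a b c d e f w1 w2 w3 := by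
      rw [hw1, hw2, hw3]; unfold tQ; ring
    have hle := hmin w1 w2 w3 h1
    have hpos1 := hpos w1 w2 w3 h1
    have h4 : (4:ℤ) ≤ (g:ℤ)^2 := by nlinarith
    nlinarith
  obtain ⟨p12, p13, p22, p23, p32, p33, hP⟩ := complete3 v1 v2 v3 hprim
  obtain ⟨q11, q12, q13, q21, q22, q23, q31, q32, q33, hQ⟩ :=
    inv3 v1 p12 p13 v2 p22 p23 v3 p32 p33 hP
  -- coefficients of the transformed form T₁
  obtain ⟨a₁, ha₁⟩ : ∃ t, t = tQ a b c d e f v1 v2 v3 := ⟨_, rfl⟩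
  obtain ⟨b₁, hb₁⟩ : ∃ t, t = tQ a b c d e f p12 p22 p32 := ⟨_, rfl⟩
  obtain ⟨c₁, hc₁⟩ : ∃ t, t = tQ a b c d e f p13 p23 p33 := ⟨_, rfl⟩
  obtain ⟨d₁, hd₁⟩ : ∃ t, t = tBil a b c d e f v1 v2 v3 p12 p22 p32 := ⟨_, rfl⟩
  obtain ⟨e₁, he₁⟩ : ∃ t, t = tBil a b c d e f v1 v2 v3 p13 p23 p33 := ⟨_, rfl⟩
  obtain ⟨f₁, hf₁⟩ : ∃ t, t = tBil a b c d e f p12 p22 p32 p13 p23 p33 := ⟨_, rfl⟩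
  rw [← ha₁] at ha₁pos hmin
  have hsub1 : ∀ X Y Z : ℤ,
      tQ a b c d e f (v1*X + p12*Y + p13*Z) (v2*X + p22*Y + p23*Z) (v3*X + p32*Y + p33*Z)
        = tQ a₁ b₁ c₁ d₁ e₁ f₁ X Y Z := by
    intro X Y Z
    rw [ha₁, hb₁, hc₁, hd₁, he₁, hf₁]
    exact subst_vals a b c d e f v1 p12 p13 v2 p22 p23 v3 p32 p33 X Y Z
  have hdet1 : tDet a₁ b₁ c₁ d₁ e₁ f₁ = 1 := by
    rw [ha₁, hb₁, hc₁, hd₁, he₁, hf₁, subst_det, hP, hdet]; ring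
  have hPne : ∀ X Y Z : ℤ, ¬(X = 0 ∧ Y = 0 ∧ Z = 0) →
      ¬(v1*X + p12*Y + p13*Z = 0 ∧ v2*X + p22*Y + p23*Z = 0 ∧ v3*X + p32*Y + p33*Z = 0) := by
    intro X Y Z hne ⟨h1, h2, h3⟩
    obtain ⟨_, hq1, hq2, hq3⟩ := hQ X Y Z
    rw [h1, h2, h3] at hq1 hq2 hq3
    simp at hq1 hq2 hq3
    exact hne ⟨hq1.symm, hq2.symm, hq3.symm⟩
  have hposT1 : tPos a₁ b₁ c₁ d₁ e₁ f₁ := by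
    intro X Y Z hne
    rw [← hsub1]
    exact hpos _ _ _ (hPne X Y Z hne)
  have hminT1 : ∀ X Y Z : ℤ, ¬(X = 0 ∧ Y = 0 ∧ Z = 0) → a₁ ≤ tQ a₁ b₁ c₁ d₁ e₁ f₁ X Y Z := by
    intro X Y Z hne
    rw [← hsub1]
    exact hmin _ _ _ (hPne X Y Z hne)
  -- the minimum is 1
  have hsq : ∀ X Y Z : ℤ, a₁ * tQ a₁ b₁ c₁ d₁ e₁ f₁ X Y Z
      = (a₁*X + d₁*Y + e₁*Z)^2 + bQ (a₁*b₁ - d₁^2) (a₁*f₁ - d₁*e₁) (a₁*c₁ - e₁^2) Y Z := by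
    intro X Y Z; unfold tQ bQ; ring
  have hbpos : bPos (a₁*b₁ - d₁^2) (a₁*f₁ - d₁*e₁) (a₁*c₁ - e₁^2) := by
    intro Y Z hYZ
    have hne : ¬(-(d₁*Y + e₁*Z) = 0 ∧ a₁*Y = 0 ∧ a₁*Z = 0) := by
      rintro ⟨h1, h2, h3⟩
      rcases mul_eq_zero.mp h2 with h | h
      · omega
      · rcases mul_eq_zero.mp h3 with h' | h'
        · omega
        · exact hYZ ⟨h, h'⟩
    have hp := hposT1 _ _ _ hne
    have hq := hsq (-(d₁*Y + e₁*Z)) (a₁*Y) (a₁*Z)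
    have hhom : bQ (a₁*b₁ - d₁^2) (a₁*f₁ - d₁*e₁) (a₁*c₁ - e₁^2) (a₁*Y) (a₁*Z)
        = a₁^2 * bQ (a₁*b₁ - d₁^2) (a₁*f₁ - d₁*e₁) (a₁*c₁ - e₁^2) Y Z := by
      unfold bQ; ring
    have hzero : (a₁*(-(d₁*Y + e₁*Z)) + d₁*(a₁*Y) + e₁*(a₁*Z))^2 = 0 := by ring_nf
    nlinarith [mul_pos ha₁pos hp]
  have hbdet : (a₁*b₁ - d₁^2)*(a₁*c₁ - e₁^2) - (a₁*f₁ - d₁*e₁)^2 = a₁ := by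
    have : (a₁*b₁ - d₁^2)*(a₁*c₁ - e₁^2) - (a₁*f₁ - d₁*e₁)^2
        = a₁ * tDet a₁ b₁ c₁ d₁ e₁ f₁ := by unfold tDet; ring
    rw [this, hdet1, mul_one]
  obtain ⟨Y₀, Z₀, hYZ₀, hbd⟩ := bMinBound _ _ _ hbpos
  rw [hbdet] at hbd
  obtain ⟨k, hk1, hk2⟩ := round_lemma a₁ (d₁*Y₀ + e₁*Z₀) ha₁pos
  have hne' : ¬(k = 0 ∧ Y₀ = 0 ∧ Z₀ = 0) := by rintro ⟨_, h2, h3⟩; exact hYZ₀ ⟨h2, h3⟩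
  have hge := hminT1 k Y₀ Z₀ hne'
  have hQval := hsq k Y₀ Z₀
  have hHpos := hbpos Y₀ Z₀ hYZ₀
  obtain ⟨H, hH⟩ : ∃ t, t = bQ (a₁*b₁ - d₁^2) (a₁*f₁ - d₁*e₁) (a₁*c₁ - e₁^2) Y₀ Z₀ := ⟨_, rfl⟩
  obtain ⟨Qv, hQv⟩ : ∃ t, t = tQ a₁ b₁ c₁ d₁ e₁ f₁ k Y₀ Z₀ := ⟨_, rfl⟩
  rw [← hH] at hbd hHpos hQval
  rw [← hQv] at hQval hge
  obtain ⟨L, hL⟩ : ∃ t, t = a₁*k + d₁*Y₀ + e₁*Z₀ := ⟨_, rfl⟩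
  have hQval' : a₁ * Qv = L^2 + H := by rw [hL]; exact hQval
  have ha₁1 : a₁ = 1 :=
    tern_min_one a₁ H Qv L ha₁pos hbd hge hQval'
      (by rw [hL]; linarith [hk2]) (by rw [hL]; linarith [hk1])
  -- shear to split off the first variable
  have hsub2 : ∀ X Y Z : ℤ, tQ a₁ b₁ c₁ d₁ e₁ f₁ (X - d₁*Y - e₁*Z) Y Z
      = tQ 1 (b₁ - d₁^2) (c₁ - e₁^2) 0 0 (f₁ - d₁*e₁) X Y Z := by
    intro X Y Z; rw [ha₁1]; unfold tQ; ring
  have hdet2 : (b₁ - d₁^2)*(c₁ - e₁^2) - (f₁ - d₁*e₁)^2 = 1 := by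
    rw [ha₁1] at hdet1
    unfold tDet at hdet1; linear_combination hdet1
  have hbpos2 : bPos (b₁ - d₁^2) (f₁ - d₁*e₁) (c₁ - e₁^2) := by
    intro Y Z hYZ
    have h1 : bQ (b₁ - d₁^2) (f₁ - d₁*e₁) (c₁ - e₁^2) Y Z
        = tQ 1 (b₁ - d₁^2) (c₁ - e₁^2) 0 0 (f₁ - d₁*e₁) 0 Y Z := by unfold tQ bQ; ring
    rw [h1, ← hsub2]
    exact hposT1 _ _ _ (by rintro ⟨_, h2, h3⟩; exact hYZ ⟨h2, h3⟩)
  obtain ⟨P, Q', R, S, hdetb, hbid⟩ := bEquivId _ _ _ hbpos2 hdet2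
  -- assemble
  obtain ⟨⟨hp1, hp2, hp3⟩, _⟩ := hQ x y z
  set X₁ := q11*x + q12*y + q13*z with hX₁
  set Y₁ := q21*x + q22*y + q23*z with hY₁
  set Z₁ := q31*x + q32*y + q33*z with hZ₁
  set Y' := S*Y₁ - Q'*Z₁ with hY'
  set Z' := -R*Y₁ + P*Z₁ with hZ'
  have hYZ1 : P*Y' + Q'*Z' = Y₁ := by rw [hY', hZ']; linear_combination Y₁ * hdetb
  have hYZ2 : R*Y' + S*Z' = Z₁ := by rw [hY', hZ']; linear_combination Z₁ * hdetb
  refine ⟨X₁ + d₁*Y₁ + e₁*Z₁, Y', Z', ?_⟩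
  calc tQ a b c d e f x y z
      = tQ a b c d e f (v1*X₁ + p12*Y₁ + p13*Z₁) (v2*X₁ + p22*Y₁ + p23*Z₁)
          (v3*X₁ + p32*Y₁ + p33*Z₁) := by rw [hp1, hp2, hp3]
    _ = tQ a₁ b₁ c₁ d₁ e₁ f₁ X₁ Y₁ Z₁ := hsub1 X₁ Y₁ Z₁
    _ = tQ a₁ b₁ c₁ d₁ e₁ f₁ ((X₁ + d₁*Y₁ + e₁*Z₁) - d₁*Y₁ - e₁*Z₁) Y₁ Z₁ := by ring_nf
    _ = tQ 1 (b₁ - d₁^2) (c₁ - e₁^2) 0 0 (f₁ - d₁*e₁) (X₁ + d₁*Y₁ + e₁*Z₁) Y₁ Z₁ :=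
        hsub2 _ _ _
    _ = (X₁ + d₁*Y₁ + e₁*Z₁)^2 + bQ (b₁ - d₁^2) (f₁ - d₁*e₁) (c₁ - e₁^2) Y₁ Z₁ := by
        unfold tQ bQ; ring
    _ = (X₁ + d₁*Y₁ + e₁*Z₁)^2 + bQ (b₁ - d₁^2) (f₁ - d₁*e₁) (c₁ - e₁^2)
          (P*Y' + Q'*Z') (R*Y' + S*Z') := by rw [hYZ1, hYZ2]
    _ = (X₁ + d₁*Y₁ + e₁*Z₁)^2 + (Y'^2 + Z'^2) := by rw [hbid Y' Z']
    _ = (X₁ + d₁*Y₁ + e₁*Z₁)^2 + Y'^2 + Z'^2 := by ring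

lemma rep_of_aux (n : ℕ) (hn : 0 < n) (Q' b c r : ℤ) (hQ' : 0 < Q')
    (hb : (n : ℤ) * b - 1 = Q') (hc : Q' * c = 1 + (n : ℤ) * r^2) :
    ∃ x y z : ℤ, (n : ℤ) = x^2 + y^2 + z^2 := by
  have hnz : (0:ℤ) < n := by exact_mod_cast hn
  have hdet : tDet (n:ℤ) b c 1 0 r = 1 := by
    unfold tDet; linear_combination c*hb + hc
  have key : ∀ x y z : ℤ, (n:ℤ)*Q'*(tQ (n:ℤ) b c 1 0 r x y z)
      = Q'*((n:ℤ)*x+y)^2 + (Q'*y+(n:ℤ)*r*z)^2 + (n:ℤ)*z^2 := by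
    intro x y z; unfold tQ
    linear_combination Q'*y^2*hb + (n:ℤ)*z^2*hc
  have hpos : tPos (n:ℤ) b c 1 0 r := by
    intro x y z hne
    have hk := key x y z
    have t1 : 0 ≤ Q'*((n:ℤ)*x+y)^2 := by positivity
    have t2 : 0 ≤ (Q'*y+(n:ℤ)*r*z)^2 := sq_nonneg _
    have t3 : 0 ≤ (n:ℤ)*z^2 := by positivity
    have hr : 0 < Q'*((n:ℤ)*x+y)^2 + (Q'*y+(n:ℤ)*r*z)^2 + (n:ℤ)*z^2 := by
      by_cases hz : z = 0
      · by_cases hy : y = 0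
        · have hx : x ≠ 0 := by tauto
          have hne0 : (n:ℤ)*x + y ≠ 0 := by
            rw [hy, add_zero]
            exact mul_ne_zero hnz.ne' hx
          have : 0 < Q'*((n:ℤ)*x+y)^2 :=
            mul_pos hQ' (pow_two_pos_of_ne_zero hne0)
          linarith
        · have : 0 < (Q'*y+(n:ℤ)*r*z)^2 := by
            rw [hz]
            have : Q'*y + (n:ℤ)*r*0 = Q'*y := by ring
            rw [this]
            positivity
          linarith
      · have : 0 < (n:ℤ)*z^2 := by positivity
        linarith
    nlinarith [mul_pos hnz hQ', hk, hr]
  obtain ⟨u, v, w, huvw⟩ := tern_to_squares (n:ℤ) b c 1 0 r hpos hdet 1 0 0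
  have hval : tQ (n:ℤ) b c 1 0 r 1 0 0 = (n:ℤ) := by unfold tQ; ring
  exact ⟨u, v, w, by rw [← hval, huvw]⟩

lemma dirichlet_mod (M A bound : ℕ) (hM : 0 < M) (hA : Nat.Coprime A M) :
    ∃ q : ℕ, bound < q ∧ q.Prime ∧ q % M = A % M := by
  haveI : NeZero M := ⟨hM.ne'⟩
  obtain ⟨p, h1, h2, h3⟩ := Nat.forall_exists_prime_gt_and_eq_mod
    ((ZMod.isUnit_iff_coprime A M).mpr hA) bound
  exact ⟨p, h1, h2, (ZMod.natCast_eq_natCast_iff' p A M).mp h3⟩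

lemma exists_r (n q : ℕ) (hq : q.Prime) (hq2 : q % 2 = 1) (hqn : ¬ (q:ℤ) ∣ (n:ℤ))
    (hJ : jacobiSym (-(n:ℤ)) q = 1) :
    ∃ r : ℤ, Odd r ∧ (q:ℤ) ∣ 1 + (n:ℤ) * r^2 := by
  haveI : Fact q.Prime := ⟨hq⟩
  obtain ⟨ρ, hρ⟩ := ZMod.isSquare_of_jacobiSym_eq_one hJ
  have hsq : ρ * ρ = -((n:ℕ) : ZMod q) := by push_cast at hρ; rw [← hρ]
  have hn0 : ((n:ℕ) : ZMod q) ≠ 0 := by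
    intro h
    exact hqn (Int.natCast_dvd_natCast.mpr ((ZMod.natCast_eq_zero_iff n q).mp h))
  set i : ZMod q := (((n:ℕ) : ZMod q))⁻¹ with hi
  have hni : ((n:ℕ) : ZMod q) * i = 1 := mul_inv_cancel₀ hn0
  set r₀ : ZMod q := ρ * i with hr₀
  have key : ((n:ℕ) : ZMod q) * r₀^2 = -1 := by
    have h1 : ((n:ℕ) : ZMod q) * r₀^2 = (ρ * ρ) * (((n:ℕ) : ZMod q) * i * i) := by
      rw [hr₀]; ring
    have h2 : ((n:ℕ) : ZMod q) * (((n:ℕ) : ZMod q) * i * i)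
        = (((n:ℕ) : ZMod q) * i) * (((n:ℕ) : ZMod q) * i) := by ring
    rw [h1, hsq, neg_mul, h2, hni, one_mul]
  set r₁ : ℤ := (r₀.val : ℤ) with hr₁
  have hval : ((r₀.val : ℕ) : ZMod q) = r₀ := ZMod.natCast_rightInverse r₀
  have hcast : ((1 + (n:ℤ) * r₁^2 : ℤ) : ZMod q) = 0 := by
    have : ((1 + (n:ℤ) * r₁^2 : ℤ) : ZMod q)
        = 1 + ((n:ℕ) : ZMod q) * ((r₀.val : ℕ) : ZMod q)^2 := by rw [hr₁]; push_cast; ring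
    rw [this, hval, key]; ring
  have hdvd : (q:ℤ) ∣ 1 + (n:ℤ) * r₁^2 :=
    (ZMod.intCast_zmod_eq_zero_iff_dvd _ _).mp hcast
  rcases Int.even_or_odd r₁ with he | ho
  · refine ⟨r₁ + q, ?_, ?_⟩
    · obtain ⟨t, ht⟩ := he
      obtain ⟨s, hs⟩ : ∃ s:ℕ, q = 2*s+1 := ⟨q/2, by omega⟩
      exact ⟨t + s, by push_cast [ht, hs]; ring⟩
    · obtain ⟨c, hc⟩ := hdvd
      exact ⟨c + (n:ℤ)*(2*r₁ + q), by push_cast; linear_combination hc⟩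
  · exact ⟨r₁, ho, hdvd⟩

/-- Core case n ≡ 1, 5 (mod 8). -/
lemma core_case15 (n : ℕ) (hn : n % 4 = 1) : ∃ x y z : ℤ, (n : ℤ) = x^2 + y^2 + z^2 := by
  obtain ⟨m, hm⟩ : ∃ m, n = 2*m+1 := ⟨n/2, by omega⟩
  have hn0 : 0 < n := by omega
  set A : ℕ := 2*n - 1 with hA
  have hAz : (A:ℤ) = 2*(n:ℤ) - 1 := by omega
  have hcop : Nat.Coprime A (4*n) := by
    rw [← Nat.isCoprime_iff_coprime]
    refine ⟨2*(n:ℤ)-1, 1-(n:ℤ), ?_⟩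
    rw [hAz]; push_cast; ring
  obtain ⟨q, hqb, hqp, hqm⟩ := dirichlet_mod (4*n) A (2*n+2) (by omega) hcop
  have hAM : A % (4*n) = A := Nat.mod_eq_of_lt (by omega)
  obtain ⟨k, hk⟩ : ∃ k, q = (4*n) * k + A := ⟨q / (4*n), by
    have := Nat.div_add_mod q (4*n); omega⟩
  have hqz : (q:ℤ) = 4*(n:ℤ)*(k:ℤ) + (2*(n:ℤ) - 1) := by
    rw [hk]; push_cast [hAz]; ring
  have hd4 : (4:ℤ) ∣ (q:ℤ) - 1 := ⟨(n:ℤ)*k + m, by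
    have hmz : (n:ℤ) = 2*(m:ℤ)+1 := by omega
    linear_combination hqz + 2*hmz⟩
  have hq4 : q % 4 = 1 := by omega
  have hdn : (n:ℤ) ∣ (q:ℤ) + 1 := ⟨4*(k:ℤ) + 2, by linear_combination hqz⟩
  have hq2 : q % 2 = 1 := by omega
  have hqgt : n < q := by omega
  have hqn : ¬ (q:ℤ) ∣ (n:ℤ) := by
    intro hdvd
    have := Int.le_of_dvd (by exact_mod_cast hn0) hdvd
    omega
  -- Jacobi computation
  have hJ : jacobiSym (-(n:ℤ)) q = 1 := by
    have h1 : jacobiSym (-(n:ℤ)) q = ZMod.χ₄ q * jacobiSym (n:ℤ) q :=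
      jacobiSym.neg (n:ℤ) (Nat.odd_iff.mpr hq2)
    have h2 : ZMod.χ₄ q = 1 := ZMod.χ₄_nat_one_mod_four hq4
    have h3 : jacobiSym (n:ℤ) q = jacobiSym (q:ℤ) n :=
      jacobiSym.quadratic_reciprocity_one_mod_four' (Nat.odd_iff.mpr (by omega)) hq4
    have h4 : jacobiSym (q:ℤ) n = jacobiSym (-1 : ℤ) n := by
      apply jacobiSym.mod_left'
      have h4' : (n:ℤ) ∣ (-1 - (q:ℤ)) := by
        have : (-1 - (q:ℤ)) = -((q:ℤ)+1) := by ring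
        rw [this]; exact dvd_neg.mpr hdn
      exact Int.modEq_iff_dvd.mpr h4'

    have h5 : jacobiSym (-1 : ℤ) n = ZMod.χ₄ n := jacobiSym.at_neg_one (Nat.odd_iff.mpr (by omega))
    have h6 : ZMod.χ₄ n = 1 := ZMod.χ₄_nat_one_mod_four hn
    rw [h1, h2, h3, h4, h5, h6]; ring
  obtain ⟨r, hro, hrd⟩ := exists_r n q hqp hq2 hqn hJ
  obtain ⟨b, hb⟩ := hdn
  obtain ⟨c, hc⟩ := hrd
  exact rep_of_aux n hn0 q b c r (by exact_mod_cast hqp.pos) (by linarith) (by linarith)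

/-- Core case n ≡ 3 (mod 8). -/
lemma core_case3 (n : ℕ) (hn : n % 8 = 3) : ∃ x y z : ℤ, (n : ℤ) = x^2 + y^2 + z^2 := by
  obtain ⟨m, hm⟩ : ∃ m, n = 8*m+3 := ⟨n/8, by omega⟩
  have hn0 : 0 < n := by omega
  have hnz : (n:ℤ) = 8*(m:ℤ)+3 := by omega
  set A : ℕ := 4*m+1 with hA
  have hAz : (A:ℤ) = 4*(m:ℤ)+1 := by omega
  have c4 : IsCoprime ((A:ℕ):ℤ) (4:ℤ) := ⟨1, -(m:ℤ), by rw [hAz]; ring⟩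
  have cn : IsCoprime ((A:ℕ):ℤ) ((n:ℕ):ℤ) :=
    ⟨4*(A:ℤ), -(8*(m:ℤ)+1), by rw [hAz, hnz]; ring⟩
  have hcop : Nat.Coprime A (4*n) := by
    rw [← Nat.isCoprime_iff_coprime]; push_cast
    exact IsCoprime.mul_right c4 (by push_cast at cn; exact cn)
  obtain ⟨q, hqb, hqp, hqm⟩ := dirichlet_mod (4*n) A (2*n+2) (by omega) hcop
  have hAM : A % (4*n) = A := Nat.mod_eq_of_lt (by omega)
  obtain ⟨k, hk⟩ : ∃ k, q = (4*n) * k + A := ⟨q / (4*n), by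
    have := Nat.div_add_mod q (4*n); omega⟩
  have hqz : (q:ℤ) = 4*(n:ℤ)*(k:ℤ) + (4*(m:ℤ) + 1) := by
    rw [hk]; push_cast [hAz]; ring
  have hd4 : (4:ℤ) ∣ (q:ℤ) - 1 := ⟨(n:ℤ)*k + m, by linear_combination hqz⟩
  have hq4 : q % 4 = 1 := by omega
  have hq2 : q % 2 = 1 := by omega
  have hdn : (n:ℤ) ∣ 2*(q:ℤ) + 1 := ⟨8*(k:ℤ) + 1, by linear_combination 2*hqz - hnz⟩
  have hqgt : n < q := by omega
  have hqn : ¬ (q:ℤ) ∣ (n:ℤ) := by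
    intro hdvd
    have := Int.le_of_dvd (by exact_mod_cast hn0) hdvd
    omega
  have hJ : jacobiSym (-(n:ℤ)) q = 1 := by
    have h1 : jacobiSym (-(n:ℤ)) q = ZMod.χ₄ q * jacobiSym (n:ℤ) q :=
      jacobiSym.neg (n:ℤ) (Nat.odd_iff.mpr hq2)
    have h2 : ZMod.χ₄ q = 1 := ZMod.χ₄_nat_one_mod_four hq4
    have h3 : jacobiSym (n:ℤ) q = jacobiSym (q:ℤ) n :=
      jacobiSym.quadratic_reciprocity_one_mod_four' (Nat.odd_iff.mpr (by omega)) hq4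
    have h4 : jacobiSym (2*(q:ℤ)) n = jacobiSym (2:ℤ) n * jacobiSym (q:ℤ) n :=
      jacobiSym.mul_left 2 q n
    have h5 : jacobiSym (2*(q:ℤ)) n = jacobiSym (-1 : ℤ) n := by
      apply jacobiSym.mod_left'
      have h5' : (n:ℤ) ∣ (-1 - 2*(q:ℤ)) := by
        have : (-1 - 2*(q:ℤ)) = -(2*(q:ℤ)+1) := by ring
        rw [this]; exact dvd_neg.mpr hdn
      exact Int.modEq_iff_dvd.mpr h5'
    have h6 : jacobiSym (-1 : ℤ) n = -1 := by
      rw [jacobiSym.at_neg_one (Nat.odd_iff.mpr (by omega))]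
      exact ZMod.χ₄_nat_three_mod_four (by omega)
    have h7 : jacobiSym (2:ℤ) n = -1 := by
      rw [jacobiSym.at_two (Nat.odd_iff.mpr (by omega))]
      rw [ZMod.χ₈_nat_eq_if_mod_eight]
      simp [hn, show n % 2 = 1 by omega]
    have h8 : jacobiSym (q:ℤ) n = 1 := by
      rw [h5, h6] at h4
      rw [h7] at h4
      linarith
    rw [h1, h2, h3, h8]; ring
  obtain ⟨r, hro, hrd⟩ := exists_r n q hqp hq2 hqn hJ
  obtain ⟨t, hrt⟩ := hro
  have h2d : (2:ℤ) ∣ 1 + (n:ℤ)*r^2 :=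
    ⟨4*(m:ℤ) + 2 + (n:ℤ)*(2*t^2+2*t), by rw [hrt]; linear_combination hnz⟩
  obtain ⟨s, hs⟩ : ∃ s:ℕ, q = 2*s+1 := ⟨q/2, by omega⟩
  have h2q : IsCoprime (2:ℤ) ((q:ℕ):ℤ) := ⟨-(s:ℤ), 1, by push_cast [hs]; ring⟩
  have hdvd2q : (2*(q:ℤ)) ∣ 1 + (n:ℤ)*r^2 := h2q.mul_dvd h2d hrd
  obtain ⟨b, hb⟩ := hdn
  obtain ⟨c, hc⟩ := hdvd2q
  exact rep_of_aux n hn0 (2*q) b c r (by omega) (by linarith) (by linarith)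

/-- Core case n ≡ 2 (mod 8). -/
lemma core_case2 (n : ℕ) (hn : n % 8 = 2) : ∃ x y z : ℤ, (n : ℤ) = x^2 + y^2 + z^2 := by
  obtain ⟨n', hn'⟩ : ∃ n', n = 2*n' := ⟨n/2, by omega⟩
  obtain ⟨u, hu⟩ : ∃ u, n' = 4*u+1 := ⟨n'/4, by omega⟩
  have hn0 : 0 < n := by omega
  have huz : (n':ℤ) = 4*(u:ℤ)+1 := by omega
  have hnz2 : (n:ℤ) = 2*(n':ℤ) := by omega
  set A : ℕ := 2*n'*n' - 1 with hA
  have h1n : 1 ≤ 2*n'*n' := by nlinarith [show 1 ≤ n' by omega]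
  have hAz : (A:ℤ) = 2*(n':ℤ)*(n':ℤ) - 1 := by
    rw [hA, Nat.cast_sub h1n]; push_cast; ring
  have c2 : IsCoprime ((A:ℕ):ℤ) (2:ℤ) := ⟨1, 1 - (n':ℤ)*(n':ℤ), by rw [hAz]; ring⟩
  have c8 : IsCoprime ((A:ℕ):ℤ) (8:ℤ) := by
    have := c2.pow_right (n := 3)
    norm_num at this
    exact this
  have cn : IsCoprime ((A:ℕ):ℤ) ((n':ℕ):ℤ) := ⟨-1, 2*(n':ℤ), by rw [hAz]; ring⟩
  have hcop : Nat.Coprime A (8*n') := by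
    rw [← Nat.isCoprime_iff_coprime]; push_cast
    exact IsCoprime.mul_right c8 cn
  obtain ⟨q, hqb, hqp, hqm⟩ := dirichlet_mod (8*n') A (2*n+2) (by omega) hcop
  have hdM : ((8*n' : ℕ):ℤ) ∣ (q:ℤ) - (A:ℤ) := by
    have := (Nat.modEq_iff_dvd (n := 8*n') (a := A) (b := q)).mp hqm.symm
    simpa using this
  obtain ⟨k, hk'⟩ := hdM
  have hqz : (q:ℤ) = 8*(n':ℤ)*k + (2*(n':ℤ)*(n':ℤ) - 1) := by
    push_cast at hk'
    linear_combination hk' + hAz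
  have hd8 : (8:ℤ) ∣ (q:ℤ) - 1 := ⟨(n':ℤ)*k + 4*(u:ℤ)*u + 2*u,
    by linear_combination hqz + 2*((n':ℤ) + 4*(u:ℤ) + 1)*huz⟩
  have hq8 : q % 8 = 1 := by omega
  have hq4 : q % 4 = 1 := by omega
  have hq2 : q % 2 = 1 := by omega
  have hdn' : (n':ℤ) ∣ (q:ℤ) + 1 := ⟨8*k + 2*(n':ℤ), by linear_combination hqz⟩
  have c2n' : IsCoprime (2:ℤ) ((n':ℕ):ℤ) := ⟨-(2*(u:ℤ)), 1, by rw [huz]; ring⟩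
  have hdn : (n:ℤ) ∣ (q:ℤ) + 1 := by
    rw [hnz2]
    exact c2n'.mul_dvd ⟨(q:ℤ)/2 + 1, by omega⟩ hdn'
  have hqgt : n < q := by omega
  have hqn : ¬ (q:ℤ) ∣ (n:ℤ) := by
    intro hdvd
    have := Int.le_of_dvd (by exact_mod_cast hn0) hdvd
    omega
  have hJ : jacobiSym (-(n:ℤ)) q = 1 := by
    have h1 : jacobiSym (-(n:ℤ)) q = ZMod.χ₄ q * jacobiSym (n:ℤ) q :=
      jacobiSym.neg (n:ℤ) (Nat.odd_iff.mpr hq2)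
    have h2 : ZMod.χ₄ q = 1 := ZMod.χ₄_nat_one_mod_four hq4
    have hsplit : jacobiSym (n:ℤ) q = jacobiSym (2:ℤ) q * jacobiSym ((n':ℕ):ℤ) q := by
      have harg : (n:ℤ) = 2 * ((n':ℕ):ℤ) := by omega
      rw [harg, jacobiSym.mul_left]
    have h7 : jacobiSym (2:ℤ) q = 1 := by
      rw [jacobiSym.at_two (Nat.odd_iff.mpr hq2)]
      rw [ZMod.χ₈_nat_eq_if_mod_eight]
      simp [hq8, hq2]
    have h3 : jacobiSym ((n':ℕ):ℤ) q = jacobiSym (q:ℤ) n' :=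
      jacobiSym.quadratic_reciprocity_one_mod_four' (Nat.odd_iff.mpr (by omega)) hq4
    have h4 : jacobiSym (q:ℤ) n' = jacobiSym (-1 : ℤ) n' := by
      apply jacobiSym.mod_left'
      have h4' : (n':ℤ) ∣ (-1 - (q:ℤ)) := by
        have : (-1 - (q:ℤ)) = -((q:ℤ)+1) := by ring
        rw [this]; exact dvd_neg.mpr hdn'
      exact Int.modEq_iff_dvd.mpr h4'
    have h5 : jacobiSym (-1 : ℤ) n' = 1 := by
      rw [jacobiSym.at_neg_one (Nat.odd_iff.mpr (by omega))]
      exact ZMod.χ₄_nat_one_mod_four (by omega)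
    rw [h1, h2, hsplit, h7, h3, h4, h5]; ring
  obtain ⟨r, hro, hrd⟩ := exists_r n q hqp hq2 hqn hJ
  obtain ⟨b, hb⟩ := hdn
  obtain ⟨c, hc⟩ := hrd
  exact rep_of_aux n hn0 q b c r (by omega) (by linarith) (by linarith)

/-- Core case n ≡ 6 (mod 8). -/
lemma core_case6 (n : ℕ) (hn : n % 8 = 6) : ∃ x y z : ℤ, (n : ℤ) = x^2 + y^2 + z^2 := by
  obtain ⟨n', hn'⟩ : ∃ n', n = 2*n' := ⟨n/2, by omega⟩
  obtain ⟨w, hw⟩ : ∃ w, n' = 4*w+3 := ⟨n'/4, by omega⟩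
  have hn0 : 0 < n := by omega
  have hwz : (n':ℤ) = 4*(w:ℤ)+3 := by omega
  have hnz2 : (n:ℤ) = 2*(n':ℤ) := by omega
  set A : ℕ := 2*n - 1 with hA
  have hAz : (A:ℤ) = 4*(n':ℤ) - 1 := by omega
  have c2 : IsCoprime ((A:ℕ):ℤ) (2:ℤ) := ⟨1, 1 - 2*(n':ℤ), by rw [hAz]; ring⟩
  have c8 : IsCoprime ((A:ℕ):ℤ) (8:ℤ) := by
    have := c2.pow_right (n := 3)
    norm_num at this
    exact this
  have cn : IsCoprime ((A:ℕ):ℤ) ((n':ℕ):ℤ) := ⟨-1, 4, by rw [hAz]; ring⟩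
  have hcop : Nat.Coprime A (8*n') := by
    rw [← Nat.isCoprime_iff_coprime]; push_cast
    exact IsCoprime.mul_right c8 cn
  obtain ⟨q, hqb, hqp, hqm⟩ := dirichlet_mod (8*n') A (2*n+2) (by omega) hcop
  have hAM : A % (8*n') = A := Nat.mod_eq_of_lt (by omega)
  obtain ⟨k, hk⟩ : ∃ k, q = (8*n') * k + A := ⟨q / (8*n'), by
    have := Nat.div_add_mod q (8*n'); omega⟩
  have hqz : (q:ℤ) = 8*(n':ℤ)*(k:ℤ) + (4*(n':ℤ) - 1) := by
    rw [hk]; push_cast [hAz]; ring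
  have hd8 : (8:ℤ) ∣ (q:ℤ) - 3 := ⟨(n':ℤ)*k + 2*w + 1, by linear_combination hqz + 4*hwz⟩
  have hq8 : q % 8 = 3 := by omega
  have hq4 : q % 4 = 3 := by omega
  have hq2 : q % 2 = 1 := by omega
  have hdn' : (n':ℤ) ∣ (q:ℤ) + 1 := ⟨8*k + 4, by linear_combination hqz⟩
  have c2n' : IsCoprime (2:ℤ) ((n':ℕ):ℤ) := ⟨-(2*(w:ℤ)+1), 1, by rw [hwz]; ring⟩
  have hdn : (n:ℤ) ∣ (q:ℤ) + 1 := by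
    rw [hnz2]
    exact c2n'.mul_dvd ⟨(q:ℤ)/2 + 1, by omega⟩ hdn'
  have hqgt : n < q := by omega
  have hqn : ¬ (q:ℤ) ∣ (n:ℤ) := by
    intro hdvd
    have := Int.le_of_dvd (by exact_mod_cast hn0) hdvd
    omega
  have hJ : jacobiSym (-(n:ℤ)) q = 1 := by
    have h1 : jacobiSym (-(n:ℤ)) q = ZMod.χ₄ q * jacobiSym (n:ℤ) q :=
      jacobiSym.neg (n:ℤ) (Nat.odd_iff.mpr hq2)
    have h2 : ZMod.χ₄ q = -1 := ZMod.χ₄_nat_three_mod_four hq4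
    have hsplit : jacobiSym (n:ℤ) q = jacobiSym (2:ℤ) q * jacobiSym ((n':ℕ):ℤ) q := by
      have harg : (n:ℤ) = 2 * ((n':ℕ):ℤ) := by omega
      rw [harg, jacobiSym.mul_left]
    have h7 : jacobiSym (2:ℤ) q = -1 := by
      rw [jacobiSym.at_two (Nat.odd_iff.mpr hq2)]
      rw [ZMod.χ₈_nat_eq_if_mod_eight]
      simp [hq8, hq2]
    have h3 : jacobiSym ((n':ℕ):ℤ) q = - jacobiSym (q:ℤ) n' := by
      exact jacobiSym.quadratic_reciprocity_three_mod_four (by omega : n' % 4 = 3) hq4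
    have h4 : jacobiSym (q:ℤ) n' = jacobiSym (-1 : ℤ) n' := by
      apply jacobiSym.mod_left'
      have h4' : (n':ℤ) ∣ (-1 - (q:ℤ)) := by
        have : (-1 - (q:ℤ)) = -((q:ℤ)+1) := by ring
        rw [this]; exact dvd_neg.mpr hdn'
      exact Int.modEq_iff_dvd.mpr h4'
    have h5 : jacobiSym (-1 : ℤ) n' = -1 := by
      rw [jacobiSym.at_neg_one (Nat.odd_iff.mpr (by omega))]
      exact ZMod.χ₄_nat_three_mod_four (by omega)
    rw [h1, h2, hsplit, h7, h3, h4, h5]; ring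
  obtain ⟨r, hro, hrd⟩ := exists_r n q hqp hq2 hqn hJ
  obtain ⟨b, hb⟩ := hdn
  obtain ⟨c, hc⟩ := hrd
  exact rep_of_aux n hn0 q b c r (by omega) (by linarith) (by linarith)

/-- The core arithmetic case. -/
lemma core_rep (n : ℕ) (hn : n % 8 = 1 ∨ n % 8 = 2 ∨ n % 8 = 3 ∨ n % 8 = 5 ∨ n % 8 = 6) :
    ∃ x y z : ℤ, (n : ℤ) = x^2 + y^2 + z^2 := by
  rcases hn with h | h | h | h | h
  · exact core_case15 n (by omega)
  · exact core_case2 n h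
  · exact core_case3 n h
  · exact core_case15 n (by omega)
  · exact core_case6 n h

theorem threeSquaresNat (m : ℕ) (h : ¬ ∃ a b : ℕ, m = 4^a * (8*b + 7)) :
    ∃ x y z : ℤ, (m : ℤ) = x^2 + y^2 + z^2 := by
  induction m using Nat.strong_induction_on with
  | _ m ih =>
    by_cases h0 : m = 0
    · exact ⟨0, 0, 0, by simp [h0]⟩
    by_cases h4 : m % 4 = 0
    · obtain ⟨m', hm'⟩ : ∃ m', m = 4*m' := ⟨m/4, by omega⟩
      have h' : ¬ ∃ a b : ℕ, m' = 4^a * (8*b + 7) := by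
        rintro ⟨a, b, hab⟩
        exact h ⟨a+1, b, by rw [hm', hab]; ring⟩
      obtain ⟨x, y, z, hxyz⟩ := ih m' (by omega) h'
      exact ⟨2*x, 2*y, 2*z, by rw [hm']; push_cast; linear_combination 4*hxyz⟩
    · have h7 : m % 8 ≠ 7 := by
        intro h7
        exact h ⟨0, m/8, by omega⟩
      exact core_rep m (by omega)

lemma sq_mod4 (x : ℤ) : (x % 2 = 0 ∧ x^2 % 4 = 0) ∨ (x % 2 = 1 ∧ x^2 % 4 = 1) := by
  rcases Int.even_or_odd x with ⟨k, hk⟩ | ⟨k, hk⟩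
  · left; subst hk; constructor
    · omega
    · have : (k + k)^2 = 4 * k^2 := by ring
      omega
  · right; subst hk; constructor
    · omega
    · have : (2*k + 1)^2 = 4 * (k^2 + k) + 1 := by ring
      omega

lemma finish_step (T n x y z k₀ k₁ k₂ k₃ : ℤ)
    (hsum : x^2 + y^2 + z^2 = 4*n - T^2)
    (e₀ : T + x + y + z = 4*k₀) (e₁ : T + x - y - z = 4*k₁)
    (e₂ : T - x + y - z = 4*k₂) (e₃ : T - x - y + z = 4*k₃) :
    k₀^2 + k₁^2 + k₂^2 + k₃^2 = n ∧ k₀ + k₁ + k₂ + k₃ = T := by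
  constructor
  · have h16 : (4*k₀)^2 + (4*k₁)^2 + (4*k₂)^2 + (4*k₃)^2
        = 4*(T^2 + (x^2 + y^2 + z^2)) := by
      rw [← e₀, ← e₁, ← e₂, ← e₃]; ring
    nlinarith [h16, hsum]
  · linarith [e₀, e₁, e₂, e₃]


theorem stmt_14 (T n : ℤ) (hn : 0 ≤ n) (hpar : n ≡ T [ZMOD 2]) (hge : T^2 ≤ 4 * n)
    (hform : ¬ ∃ a b : ℕ, 4 * n - T^2 = 4^a * (8 * b + 7)) :
    ∃ a₀ a₁ a₂ a₃ : ℤ, a₀^2 + a₁^2 + a₂^2 + a₃^2 = n ∧ a₀ + a₁ + a₂ + a₃ = T := by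
  have hm0 : 0 ≤ 4 * n - T^2 := by omega
  have h3 : ∃ x y z : ℤ, 4 * n - T^2 = x^2 + y^2 + z^2 := by
    obtain ⟨x, y, z, hxyz⟩ := threeSquaresNat (4 * n - T^2).toNat (by
      rintro ⟨a, b, hab⟩
      exact hform ⟨a, b, by
        rw [← Int.toNat_of_nonneg hm0, hab]; push_cast; ring⟩)
    exact ⟨x, y, z, by rw [← Int.toNat_of_nonneg hm0]; exact_mod_cast hxyz⟩
  obtain ⟨x, y, z, hxyz⟩ := h3
  have hpar' : n % 2 = T % 2 := hpar
  rcases sq_mod4 T with ⟨hT1, hT2⟩ | ⟨hT1, hT2⟩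
  · -- T even; all of x, y, z must be even
    rcases sq_mod4 x with ⟨hx1, hx2⟩ | ⟨hx1, hx2⟩ <;>
      rcases sq_mod4 y with ⟨hy1, hy2⟩ | ⟨hy1, hy2⟩ <;>
        rcases sq_mod4 z with ⟨hz1, hz2⟩ | ⟨hz1, hz2⟩ <;>
          try (exfalso; omega)
    -- all even case
    obtain ⟨t, ht⟩ : ∃ t, T = 2 * t := ⟨T / 2, by omega⟩
    obtain ⟨x₁, hx⟩ : ∃ x₁, x = 2 * x₁ := ⟨x / 2, by omega⟩
    obtain ⟨y₁, hy⟩ : ∃ y₁, y = 2 * y₁ := ⟨y / 2, by omega⟩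
    obtain ⟨z₁, hz⟩ : ∃ z₁, z = 2 * z₁ := ⟨z / 2, by omega⟩
    have heq4 : 4*(x₁^2 + y₁^2 + z₁^2) = 4*(n - t^2) := by
      subst ht hx hy hz; linear_combination -hxyz
    have heq : x₁^2 + y₁^2 + z₁^2 = n - t^2 := by omega
    have pt := sq_mod4 t
    have px := sq_mod4 x₁
    have py := sq_mod4 y₁
    have pz := sq_mod4 z₁
    obtain ⟨k₀, hk₀⟩ : ∃ k, T + x + y + z = 4*k := ⟨(T+x+y+z)/4, by omega⟩
    obtain ⟨k₁, hk₁⟩ : ∃ k, T + x - y - z = 4*k := ⟨(T+x-y-z)/4, by omega⟩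
    obtain ⟨k₂, hk₂⟩ : ∃ k, T - x + y - z = 4*k := ⟨(T-x+y-z)/4, by omega⟩
    obtain ⟨k₃, hk₃⟩ : ∃ k, T - x - y + z = 4*k := ⟨(T-x-y+z)/4, by omega⟩
    obtain ⟨h1, h2⟩ := finish_step T n x y z k₀ k₁ k₂ k₃ (by omega) hk₀ hk₁ hk₂ hk₃
    exact ⟨k₀, k₁, k₂, k₃, h1, h2⟩
  · -- T odd; all of x, y, z must be odd
    rcases sq_mod4 x with ⟨hx1, hx2⟩ | ⟨hx1, hx2⟩ <;>
      rcases sq_mod4 y with ⟨hy1, hy2⟩ | ⟨hy1, hy2⟩ <;>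
        rcases sq_mod4 z with ⟨hz1, hz2⟩ | ⟨hz1, hz2⟩ <;>
          try (exfalso; omega)
    -- all odd case; adjust signs
    obtain ⟨x', hx'sq, hx'1, hTx⟩ : ∃ x', x'^2 = x^2 ∧ x' % 2 = 1 ∧ (T + x') % 4 = 0 := by
      rcases Int.emod_emod_of_dvd (T + x) (dvd_refl 4) with _
      by_cases h : (T + x) % 4 = 0
      · exact ⟨x, rfl, hx1, h⟩
      · exact ⟨-x, by ring, by omega, by omega⟩
    obtain ⟨z', hz'sq, hz'1, hyz⟩ : ∃ z', z'^2 = z^2 ∧ z' % 2 = 1 ∧ (y + z') % 4 = 0 := by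
      by_cases h : (y + z) % 4 = 0
      · exact ⟨z, rfl, hz1, h⟩
      · exact ⟨-z, by ring, by omega, by omega⟩
    obtain ⟨k₀, hk₀⟩ : ∃ k, T + x' + y + z' = 4*k := ⟨(T+x'+y+z')/4, by omega⟩
    obtain ⟨k₁, hk₁⟩ : ∃ k, T + x' - y - z' = 4*k := ⟨(T+x'-y-z')/4, by omega⟩
    obtain ⟨k₂, hk₂⟩ : ∃ k, T - x' + y - z' = 4*k := ⟨(T-x'+y-z')/4, by omega⟩
    obtain ⟨k₃, hk₃⟩ : ∃ k, T - x' - y + z' = 4*k := ⟨(T-x'-y+z')/4, by omega⟩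
    obtain ⟨h1, h2⟩ := finish_step T n x' y z' k₀ k₁ k₂ k₃ (by rw [hx'sq, hz'sq]; omega)
      hk₀ hk₁ hk₂ hk₃
    exact ⟨k₀, k₁, k₂, k₃, h1, h2⟩
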